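/- Let G = (V,E) be a graph with node weights c_v ≥ 1 and let λ > 0. Suppose x : V → ℝ_{≥0} satisfies Σ_{v∈V} c_v·x_v = 1 and Σ_{v∈V} x_v·q(σ)_v ≥ λ for every permutation σ of V. Then there exists τ ∈ (0,1] such that the set S_τ = {v ∈ V : x_v ≥ τ} is nonempty and has node-weighted density ρ(S_τ) = |E(S_τ)|/c(S_τ) ≥ λ. -/

import Mathlib

open scoped Classical

/-- Number of edges of `G` with both endpoints in `S` (each edge counted once). -/
noncomputable def edgeCount {n : ℕ} (G : SimpleGraph (Fin n)) (S : Finset (Fin n)) : ℕ :=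
  ((S ×ˢ S).filter fun p => G.Adj p.1 p.2 ∧ p.1 < p.2).card

/-- Node-weighted density `ρ(S) = |E(S)|/c(S)` where `c(S) = Σ_{v∈S} c_v`. -/
noncomputable def densityW {n : ℕ} (G : SimpleGraph (Fin n)) (c : Fin n → ℝ)
    (S : Finset (Fin n)) : ℝ :=
  (edgeCount G S : ℝ) / (∑ v ∈ S, c v)

/-- `q(σ)_v`: the number of edges `{u,v}` of `G` with `u` preceding `v` in the
permutation `σ` (where `u` precedes `v` iff `σ u < σ v`). -/
noncomputable def qPerm {n : ℕ} (G : SimpleGraph (Fin n)) (σ : Equiv.Perm (Fin n))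
    (v : Fin n) : ℕ :=
  (Finset.univ.filter fun u => G.Adj u v ∧ σ u < σ v).card

lemma pairCount_eq_edgeCount {n : ℕ} (G : SimpleGraph (Fin n)) (T : Finset (Fin n))
    (r : Fin n → ℕ) (hr : Function.Injective r) :
    ((T ×ˢ T).filter fun p => G.Adj p.1 p.2 ∧ r p.1 < r p.2).card = edgeCount G T := by
  unfold edgeCount
  apply Finset.card_nbij' (fun p => if p.1 < p.2 then p else p.swap)
    (fun p => if r p.1 < r p.2 then p else p.swap)
  · intro p hp
    simp only [Finset.mem_coe, Finset.mem_filter, Finset.mem_product] at hp ⊢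
    obtain ⟨⟨h1, h2⟩, hadj, hlt⟩ := hp
    have hne : p.1 ≠ p.2 := G.ne_of_adj hadj
    rcases lt_or_gt_of_ne hne with h | h
    · simp only [if_pos h]
      exact ⟨⟨h1, h2⟩, hadj, h⟩
    · simp only [if_neg (not_lt.mpr h.le)]
      exact ⟨⟨h2, h1⟩, hadj.symm, h⟩
  · intro p hp
    simp only [Finset.mem_coe, Finset.mem_filter, Finset.mem_product] at hp ⊢
    obtain ⟨⟨h1, h2⟩, hadj, hlt⟩ := hp
    have hne : r p.1 ≠ r p.2 := fun h => G.ne_of_adj hadj (hr h)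
    rcases lt_or_gt_of_ne hne with h | h
    · simp only [if_pos h]
      exact ⟨⟨h1, h2⟩, hadj, h⟩
    · simp only [if_neg (not_lt.mpr h.le)]
      exact ⟨⟨h2, h1⟩, hadj.symm, h⟩
  · intro p hp
    simp only [Finset.mem_coe, Finset.mem_filter, Finset.mem_product] at hp
    obtain ⟨⟨h1, h2⟩, hadj, hlt⟩ := hp
    by_cases h : p.1 < p.2
    · simp [h, hlt]
    · simp only [if_neg h, Prod.fst_swap, Prod.snd_swap,
        if_neg (not_lt.mpr hlt.le), Prod.swap_swap]
  · intro p hp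
    simp only [Finset.mem_coe, Finset.mem_filter, Finset.mem_product] at hp
    obtain ⟨⟨h1, h2⟩, hadj, hlt⟩ := hp
    by_cases h : r p.1 < r p.2
    · simp [h, hlt]
    · simp only [if_neg h, Prod.fst_swap, Prod.snd_swap,
        if_neg (not_lt.mpr hlt.le), Prod.swap_swap]

/-- **Rounding a feasible primal solution to a dense subgraph (weighted case).**
If `x ≥ 0` satisfies `Σ_v c_v·x_v = 1` and `Σ_v x_v·q(σ)_v ≥ λ` for every permutation
`σ`, then some threshold set `S_τ = {v : x_v ≥ τ}` with `τ ∈ (0,1]` is nonempty and has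
node-weighted density at least `λ`. -/
theorem weighted_primal_to_discrete {n : ℕ} (G : SimpleGraph (Fin n))
    (c : Fin n → ℝ) (hc : ∀ v, 1 ≤ c v) (lam : ℝ) (hlam : 0 < lam)
    (x : Fin n → ℝ) (hx0 : ∀ v, 0 ≤ x v)
    (hxsum : ∑ v, c v * x v = 1)
    (hxq : ∀ σ : Equiv.Perm (Fin n), lam ≤ ∑ v, x v * (qPerm G σ v : ℝ)) :
    ∃ τ : ℝ, 0 < τ ∧ τ ≤ 1 ∧
      (Finset.univ.filter fun v => τ ≤ x v).Nonempty ∧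
      lam ≤ densityW G c (Finset.univ.filter fun v => τ ≤ x v) := by
  classical
  obtain ⟨s, hmono⟩ : ∃ s : Equiv.Perm (Fin n), Monotone ((fun i => -x i) ∘ s) :=
    ⟨Tuple.sort _, Tuple.monotone_sort _⟩
  set r : Fin n → ℕ := fun v => ((s.symm v : Fin n) : ℕ) with hr
  have hrinj : Function.Injective r := fun a b h => s.symm.injective (Fin.val_injective h)
  have hrn : ∀ v, r v < n := fun v => (s.symm v).2
  set y : ℕ → ℝ := fun k => if h : k < n then x (s ⟨k, h⟩) else 0 with hy
  have hy0 : ∀ k, 0 ≤ y k := by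
    intro k
    simp only [hy]
    split
    · exact hx0 _
    · exact le_refl 0
  have hstep : ∀ k, y (k + 1) ≤ y k := by
    intro k
    by_cases h1 : k + 1 < n
    · have hk : k < n := Nat.lt_of_succ_lt h1
      have hle : (⟨k, hk⟩ : Fin n) ≤ ⟨k + 1, h1⟩ := by
        simp [Fin.le_def]
      have := hmono hle
      simp only [Function.comp_apply, neg_le_neg_iff] at this
      simpa [hy, hk, h1] using this
    · have h0 : y (k + 1) = 0 := by simp [hy, h1]
      rw [h0]; exact hy0 k
  set g : ℕ → ℝ := fun k => y k - y (k + 1) with hg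
  have hg0 : ∀ k, 0 ≤ g k := fun k => sub_nonneg.mpr (hstep k)
  have hyanti : Antitone y := antitone_nat_of_succ_le hstep
  have hxy : ∀ v, x v = y (r v) := by
    intro v
    simp only [hy, dif_pos (hrn v)]
    rw [show (⟨r v, hrn v⟩ : Fin n) = s.symm v from Fin.ext rfl, Equiv.apply_symm_apply]
  have hyn : y n = 0 := by simp [hy]
  have htel : ∀ t, t ≤ n → y t = ∑ k ∈ Finset.Ico t n, g k := by
    intro t ht
    have h1 : ∑ k ∈ Finset.Ico t n, g k
        = ∑ k ∈ Finset.range n, g k - ∑ k ∈ Finset.range t, g k :=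
      Finset.sum_Ico_eq_sub _ ht
    have h2 : ∀ m, ∑ k ∈ Finset.range m, g k = y 0 - y m := by
      intro m
      simpa [hg] using Finset.sum_range_sub' y m
    rw [h1, h2, h2, hyn]; ring
  have hxind : ∀ v, x v = ∑ k ∈ Finset.range n, (if r v ≤ k then g k else 0) := by
    intro v
    rw [hxy v, htel (r v) (hrn v).le, ← Finset.sum_filter]
    congr 1
    ext k
    simp only [Finset.mem_Ico, Finset.mem_filter, Finset.mem_range]
    tauto
  set T : ℕ → Finset (Fin n) := fun k => Finset.univ.filter (fun v => r v ≤ k) with hT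
  set C : ℕ → ℝ := fun k => ∑ v ∈ T k, c v with hC
  set A : ℕ → ℝ := fun k => (edgeCount G (T k) : ℝ) with hA
  -- identity 1
  have hCid : ∑ k ∈ Finset.range n, g k * C k = 1 := by
    rw [← hxsum]
    calc ∑ k ∈ Finset.range n, g k * C k
        = ∑ k ∈ Finset.range n, ∑ v, (if r v ≤ k then c v * g k else 0) := by
          refine Finset.sum_congr rfl fun k _ => ?_
          rw [hC, Finset.mul_sum, hT, ← Finset.sum_filter]
          exact Finset.sum_congr rfl fun v _ => mul_comm _ _
      _ = ∑ v, ∑ k ∈ Finset.range n, (if r v ≤ k then c v * g k else 0) :=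
          Finset.sum_comm
      _ = ∑ v, c v * x v := by
          refine Finset.sum_congr rfl fun v _ => ?_
          rw [hxind v, Finset.mul_sum]
          refine Finset.sum_congr rfl fun k _ => ?_
          split <;> simp
  -- identity 2
  have e3 : ∀ k, ∑ v, ∑ u, (if (G.Adj u v ∧ r u < r v) ∧ r v ≤ k then (1:ℝ) else 0)
      = A k := by
    intro k
    have b1 : ∑ v, ∑ u, (if (G.Adj u v ∧ r u < r v) ∧ r v ≤ k then (1:ℝ) else 0)
        = ∑ p ∈ Finset.univ ×ˢ Finset.univ,
            (if (G.Adj p.1 p.2 ∧ r p.1 < r p.2) ∧ r p.2 ≤ k then (1:ℝ) else 0) :=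
      (Finset.sum_product_right' Finset.univ Finset.univ (fun u v =>
        if (G.Adj u v ∧ r u < r v) ∧ r v ≤ k then (1:ℝ) else 0)).symm
    rw [b1, Finset.sum_boole]
    have hset : (Finset.univ ×ˢ Finset.univ).filter
          (fun p : Fin n × Fin n => (G.Adj p.1 p.2 ∧ r p.1 < r p.2) ∧ r p.2 ≤ k)
        = (T k ×ˢ T k).filter (fun p => G.Adj p.1 p.2 ∧ r p.1 < r p.2) := by
      ext p
      simp only [Finset.mem_filter, Finset.mem_product, Finset.mem_univ, true_and, hT]
      constructor
      · rintro ⟨⟨hadj, hlt⟩, hle⟩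
        exact ⟨⟨hlt.le.trans hle, hle⟩, hadj, hlt⟩
      · rintro ⟨⟨_, hle⟩, hadj, hlt⟩
        exact ⟨⟨hadj, hlt⟩, hle⟩
    rw [hset, hA, pairCount_eq_edgeCount G (T k) r hrinj]
  have hkey : lam ≤ ∑ k ∈ Finset.range n, g k * A k := by
    refine le_trans (hxq s.symm) (le_of_eq ?_)
    have hterm : ∀ u v : Fin n, (if G.Adj u v ∧ r u < r v then x v else 0)
        = ∑ k ∈ Finset.range n, (if (G.Adj u v ∧ r u < r v) ∧ r v ≤ k then g k else 0) := by
      intro u v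
      by_cases hP : G.Adj u v ∧ r u < r v
      · rw [if_pos hP, hxind v]
        refine Finset.sum_congr rfl fun k _ => ?_
        by_cases h2 : r v ≤ k <;> simp [hP, h2]
      · rw [if_neg hP]
        symm
        exact Finset.sum_eq_zero fun j _ => if_neg (fun h => hP h.1)
    calc ∑ v, x v * (qPerm G s.symm v : ℝ)
        = ∑ v, ∑ u, (if G.Adj u v ∧ r u < r v then x v else 0) := by
          refine Finset.sum_congr rfl fun v _ => ?_
          have hfe : (Finset.univ.filter fun u => G.Adj u v ∧ s.symm u < s.symm v)
              = Finset.univ.filter fun u => G.Adj u v ∧ r u < r v := by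
            apply Finset.filter_congr
            intro u _
            exact Iff.rfl
          have hcard : (qPerm G s.symm v : ℝ)
              = ∑ u, (if G.Adj u v ∧ r u < r v then (1:ℝ) else 0) := by
            rw [Finset.sum_boole, qPerm, hfe]
          rw [hcard, Finset.mul_sum]
          refine Finset.sum_congr rfl fun u _ => ?_
          split <;> simp
      _ = ∑ v, ∑ u, ∑ k ∈ Finset.range n,
            (if (G.Adj u v ∧ r u < r v) ∧ r v ≤ k then g k else 0) := by
          refine Finset.sum_congr rfl fun v _ => Finset.sum_congr rfl fun u _ => hterm u v
      _ = ∑ v, ∑ k ∈ Finset.range n, ∑ u,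
            (if (G.Adj u v ∧ r u < r v) ∧ r v ≤ k then g k else 0) :=
          Finset.sum_congr rfl fun v _ => Finset.sum_comm
      _ = ∑ k ∈ Finset.range n, ∑ v, ∑ u,
            (if (G.Adj u v ∧ r u < r v) ∧ r v ≤ k then g k else 0) :=
          Finset.sum_comm
      _ = ∑ k ∈ Finset.range n, g k * A k := by
          refine Finset.sum_congr rfl fun k _ => ?_
          rw [← e3 k, Finset.mul_sum]
          refine Finset.sum_congr rfl fun v _ => ?_
          rw [Finset.mul_sum]
          refine Finset.sum_congr rfl fun u _ => ?_
          split <;> simp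
  -- existence of a good threshold index
  have hmain : ∃ k ∈ Finset.range n, 0 < g k ∧ lam * C k ≤ A k := by
    by_contra hcon
    push_neg at hcon
    have hnonneg : (0:ℝ) ≤ ∑ k ∈ Finset.range n, g k * (A k - lam * C k) := by
      have heq : ∑ k ∈ Finset.range n, g k * (A k - lam * C k)
          = (∑ k ∈ Finset.range n, g k * A k) - lam * ∑ k ∈ Finset.range n, g k * C k := by
        rw [Finset.mul_sum, ← Finset.sum_sub_distrib]
        exact Finset.sum_congr rfl fun k _ => by ring
      rw [heq, hCid, mul_one]
      linarith
    obtain ⟨k₀, hk₀mem, hk₀⟩ : ∃ k ∈ Finset.range n, g k * C k ≠ 0 := by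
      by_contra h
      push_neg at h
      have h0 : ∑ k ∈ Finset.range n, g k * C k = 0 := Finset.sum_eq_zero h
      rw [hCid] at h0
      norm_num at h0
    have hg₀ : 0 < g k₀ := by
      rcases (hg0 k₀).lt_or_eq with h | h
      · exact h
      · exact absurd (by rw [← h, zero_mul]) hk₀
    have hlt : ∑ k ∈ Finset.range n, g k * (A k - lam * C k)
        < ∑ k ∈ Finset.range n, (0:ℝ) := by
      apply Finset.sum_lt_sum
      · intro k hk
        rcases (hg0 k).lt_or_eq with h | h
        · have := hcon k hk h
          nlinarith
        · rw [← h, zero_mul]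
      · refine ⟨k₀, hk₀mem, ?_⟩
        have := hcon k₀ hk₀mem hg₀
        nlinarith
    rw [Finset.sum_const, smul_zero] at hlt
    linarith
  obtain ⟨k, hkmem, hgk, hup⟩ := hmain
  have hk : k < n := Finset.mem_range.mp hkmem
  -- the threshold
  refine ⟨y k, ?_, ?_, ?_, ?_⟩
  · have h1 : g k ≤ ∑ j ∈ Finset.Ico k n, g j :=
      Finset.single_le_sum (fun j _ => hg0 j) (Finset.mem_Ico.mpr ⟨le_refl k, hk⟩)
    rw [← htel k hk.le] at h1
    linarith
  · have hx1 : ∀ v, x v ≤ 1 := by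
      intro v
      have h1 : c v * x v ≤ 1 := by
        rw [← hxsum]
        exact Finset.single_le_sum
          (fun w _ => mul_nonneg (zero_le_one.trans (hc w)) (hx0 w)) (Finset.mem_univ v)
      nlinarith [hc v, hx0 v]
    have : y k = x (s ⟨k, hk⟩) := by simp [hy, hk]
    rw [this]; exact hx1 _
  all_goals {
    have hST : (Finset.univ.filter fun v => y k ≤ x v) = T k := by
      ext v
      simp only [Finset.mem_filter, Finset.mem_univ, true_and, hT]
      constructor
      · intro h
        by_contra hgt
        push_neg at hgt
        have h2 : x v ≤ y (k + 1) := by rw [hxy v]; exact hyanti hgt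
        have h3 : y (k + 1) < y k := by
          have := hgk; rw [hg] at this; simp only at this; linarith
        linarith
      · intro h
        rw [hxy v]
        exact hyanti h
    have hmem : s ⟨k, hk⟩ ∈ T k := by
      simp only [hT, Finset.mem_filter, Finset.mem_univ, true_and, hr,
        Equiv.symm_apply_apply]
      exact le_rfl
    have hne : (T k).Nonempty := ⟨_, hmem⟩
    first
    | (rw [hST]; exact hne)
    | (rw [hST]
       have hCpos : 0 < C k :=
         Finset.sum_pos (fun v _ => lt_of_lt_of_le zero_lt_one (hc v)) hne
       show lam ≤ (edgeCount G (T k) : ℝ) / ∑ v ∈ T k, c v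
       exact (le_div_iff₀ hCpos).mpr hup)
  }
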